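/- arXiv:2510.12484 — 3 statements merged into one kernel-verified Lean document; each statement's English description precedes it below -/
import Mathlib

section
/- Let 1 < p < 5 and b ≥ 0. There is no function u : [0,∞) → ℝ with the following properties: u is continuously differentiable on [0,∞) and twice continuously differentiable on (0,∞); u(r) > 0 for all r ≥ 0; u(0) = 1 and u′(0) = 0; and u″(r) + (2/r)·u′(r) + u(r)^p + b·u(r)^5 = 0 for all r > 0. Equivalently, every solution of this initial value problem for the limit equation must change sign on [0,∞). -/
open Filter Set

set_option maxHeartbeats 4000000 in
private lemma statement11_aux (p b : ℝ) (hp1 : 1 < p) (hp5 : p < 5) (hb : 0 ≤ b)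
    (u : ℝ → ℝ)
    (hC1 : ContDiffOn ℝ 1 u (Ici 0)) (hC2 : ContDiffOn ℝ 2 u (Ioi 0))
    (hpos : ∀ r : ℝ, 0 ≤ r → 0 < u r) (hu0 : u 0 = 1)
    (hd0 : HasDerivWithinAt u 0 (Ici 0) 0)
    (hode : ∀ r : ℝ, 0 < r →
      deriv (deriv u) r + (2 / r) * deriv u r + u r ^ p + b * u r ^ 5 = 0) : False := by
  set u1 : ℝ → ℝ := derivWithin u (Ici 0) with hu1def
  have hucont : ContinuousOn u (Ici 0) := hC1.continuousOn
  have hu1cont : ContinuousOn u1 (Ici 0) :=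
    hC1.continuousOn_derivWithin (uniqueDiffOn_Ici 0) le_rfl
  have hu1zero : u1 0 = 0 := hd0.derivWithin (uniqueDiffOn_Ici 0 0 self_mem_Ici)
  have hu1eq : ∀ r : ℝ, 0 < r → u1 r = deriv u r := fun r hr =>
    derivWithin_of_mem_nhds (Ici_mem_nhds hr)
  have hdu : ∀ r : ℝ, 0 < r → HasDerivAt u (u1 r) r := by
    intro r hr
    have h1 : DifferentiableAt ℝ u r :=
      (hC2.differentiableOn (by norm_num) r hr).differentiableAt (Ioi_mem_nhds hr)
    rw [hu1eq r hr]
    exact h1.hasDerivAt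
  have hdu1 : ∀ r : ℝ, 0 < r → HasDerivAt u1 (deriv (deriv u) r) r := by
    intro r hr
    have h2 : ContDiffOn ℝ 1 (deriv u) (Ioi 0) :=
      hC2.deriv_of_isOpen isOpen_Ioi (by norm_num)
    have h3 : DifferentiableAt ℝ (deriv u) r :=
      (h2.differentiableOn (by norm_num) r hr).differentiableAt (Ioi_mem_nhds hr)
    refine h3.hasDerivAt.congr_of_eventuallyEq ?_
    filter_upwards [Ioi_mem_nhds hr] with x hx
    exact hu1eq x hx
  -- the ODE in terms of u1
  have hode1 : ∀ r : ℝ, 0 < r →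
      deriv (deriv u) r = -((2 / r) * u1 r + u r ^ p + b * u r ^ 5) := by
    intro r hr
    have := hode r hr
    rw [← hu1eq r hr] at this
    linarith
  have hupos' : ∀ r : ℝ, 0 < r → u r ≠ 0 := fun r hr => (hpos r hr.le).ne'
  -- derivative of g r = r^2 * u1 r
  have hg' : ∀ r : ℝ, 0 < r →
      HasDerivAt (fun x => x ^ 2 * u1 x) (-(r ^ 2 * (u r ^ p + b * u r ^ 5))) r := by
    intro r hr
    have h := (hasDerivAt_pow 2 r).mul (hdu1 r hr)
    rw [hode1 r hr] at h
    refine h.congr_deriv ?_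
    have : r ≠ 0 := hr.ne'
    field_simp
    ring
  have hgcont : ContinuousOn (fun x : ℝ => x ^ 2 * u1 x) (Ici 0) :=
    (continuous_pow 2).continuousOn.mul hu1cont
  have hganti : StrictAntiOn (fun x : ℝ => x ^ 2 * u1 x) (Ici 0) := by
    refine strictAntiOn_of_deriv_neg (convex_Ici 0) hgcont ?_
    intro x hx
    rw [interior_Ici] at hx
    rw [(hg' x hx).deriv]
    have h1 : (0:ℝ) < u x ^ p := Real.rpow_pos_of_pos (hpos x hx.le) p
    have h2 : (0:ℝ) ≤ u x ^ 5 := (pow_pos (hpos x hx.le) 5).le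
    have h3 : (0:ℝ) < x ^ 2 := pow_pos hx 2
    nlinarith [mul_nonneg hb h2]
  have hgneg : ∀ r : ℝ, 0 < r → r ^ 2 * u1 r < 0 := by
    intro r hr
    have := hganti self_mem_Ici (le_of_lt hr) hr
    simpa [hu1zero] using this
  have hu1neg : ∀ r : ℝ, 0 < r → u1 r < 0 := by
    intro r hr
    have h3 : (0:ℝ) < r ^ 2 := pow_pos hr 2
    nlinarith [hgneg r hr]
  -- u is strictly decreasing
  have huanti : StrictAntiOn u (Ici 0) := by
    refine strictAntiOn_of_deriv_neg (convex_Ici 0) hucont ?_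
    intro x hx
    rw [interior_Ici] at hx
    rw [(hdu x hx).deriv]
    exact hu1neg x hx
  have hult1 : ∀ r : ℝ, 0 < r → u r < 1 := by
    intro r hr
    have := huanti self_mem_Ici hr.le hr
    rwa [hu0] at this
  have hule1 : ∀ r : ℝ, 0 ≤ r → u r ≤ 1 := by
    rintro r hr
    rcases eq_or_lt_of_le hr with h | h
    · simp [← h, hu0]
    · exact (hult1 r h).le
  -- step C : u1 r ≤ -(r/3) * u r ^ p
  have hupcont : ContinuousOn (fun x => u x ^ p) (Ici 0) :=
    hucont.rpow_const (fun x hx => Or.inl (hpos x hx).ne')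
  have hh' : ∀ r : ℝ, 0 < r →
      HasDerivAt (fun x => x ^ 2 * u1 x + x ^ 3 / 3 * u x ^ p)
        (-(r ^ 2 * (u r ^ p + b * u r ^ 5)) + (r ^ 2 * u r ^ p
          + r ^ 3 / 3 * (u1 r * p * u r ^ (p - 1)))) r := by
    intro r hr
    refine (hg' r hr).add ?_
    have h1 : HasDerivAt (fun x => u x ^ p) (u1 r * p * u r ^ (p - 1)) r :=
      (hdu r hr).rpow_const (Or.inl (hupos' r hr))
    have h2 : HasDerivAt (fun x : ℝ => x ^ 3 / 3) (r ^ 2) r := by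
      have := (hasDerivAt_pow 3 r).div_const 3
      refine this.congr_deriv ?_
      ring
    exact h2.mul h1
  have hhle : ∀ r : ℝ, 0 ≤ r → r ^ 2 * u1 r + r ^ 3 / 3 * u r ^ p ≤ 0 := by
    have hanti : AntitoneOn (fun x => x ^ 2 * u1 x + x ^ 3 / 3 * u x ^ p) (Ici 0) := by
      refine antitoneOn_of_deriv_nonpos (convex_Ici 0)
        (hgcont.add (((continuous_pow 3).continuousOn.div_const 3).mul hupcont)) ?_ ?_
      · intro x hx
        rw [interior_Ici] at hx
        exact (hh' x hx).differentiableAt.differentiableWithinAt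
      · intro x hx
        rw [interior_Ici] at hx
        rw [(hh' x hx).deriv]
        have h1 : (0:ℝ) < u x ^ p := Real.rpow_pos_of_pos (hpos x hx.le) p
        have h2 : (0:ℝ) ≤ u x ^ 5 := (pow_pos (hpos x hx.le) 5).le
        have h3 : (0:ℝ) < x ^ 2 := pow_pos hx 2
        have h4 : (0:ℝ) < x ^ 3 := pow_pos hx 3
        have h5 : (0:ℝ) < u x ^ (p - 1) := Real.rpow_pos_of_pos (hpos x hx.le) _
        have h6 : u1 x < 0 := hu1neg x hx
        have h7 : (0:ℝ) ≤ b * u x ^ 5 := mul_nonneg hb h2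
        nlinarith [mul_pos h4 (mul_pos (mul_pos (neg_pos.2 h6) (by linarith : (0:ℝ) < p)) h5)]
    intro r hr
    have := hanti self_mem_Ici hr hr
    simpa [hu1zero, hu0] using this
  have hu1le : ∀ r : ℝ, 0 < r → u1 r ≤ -(r / 3) * u r ^ p := by
    intro r hr
    have h := hhle r hr.le
    have h3 : (0:ℝ) < r ^ 2 := pow_pos hr 2
    rw [show -(r / 3) * u r ^ p = (-(r ^ 3 / 3) * u r ^ p) / r ^ 2 by field_simp,
      le_div_iff₀ h3]
    nlinarith
  -- step D : quadratic growth of u ^ (1-p)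
  have hφ' : ∀ r : ℝ, 0 < r →
      HasDerivAt (fun x => u x ^ (1 - p) - (p - 1) / 6 * x ^ 2)
        (u1 r * (1 - p) * u r ^ (1 - p - 1) - (p - 1) / 6 * (2 * r)) r := by
    intro r hr
    refine ((hdu r hr).rpow_const (Or.inl (hupos' r hr))).sub ?_
    have := (hasDerivAt_pow 2 r).const_mul ((p - 1) / 6)
    refine this.congr_deriv ?_
    push_cast
    ring
  have hφmono : MonotoneOn (fun x => u x ^ (1 - p) - (p - 1) / 6 * x ^ 2) (Ici 0) := by
    refine monotoneOn_of_deriv_nonneg (convex_Ici 0)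
      ((hucont.rpow_const fun x hx => Or.inl (hpos x hx).ne').sub
        ((continuous_const.mul (continuous_pow 2)).continuousOn)) ?_ ?_
    · intro x hx
      rw [interior_Ici] at hx
      exact (hφ' x hx).differentiableAt.differentiableWithinAt
    · intro x hx
      rw [interior_Ici] at hx
      rw [(hφ' x hx).deriv]
      have hA : (0:ℝ) < u x ^ p := Real.rpow_pos_of_pos (hpos x hx.le) p
      have he : u x ^ (1 - p - 1) = (u x ^ p)⁻¹ := by
        rw [show (1:ℝ) - p - 1 = -p by ring, Real.rpow_neg (hpos x hx.le).le]
      rw [he]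
      have h1 := hu1le x hx
      have h2 : u x ^ p * (u x ^ p)⁻¹ = 1 := mul_inv_cancel₀ hA.ne'
      have h3 : (0:ℝ) < (u x ^ p)⁻¹ := inv_pos.2 hA
      have h4 : u1 x * (1 - p) ≥ (p - 1) * (x / 3) * u x ^ p := by nlinarith
      calc (0:ℝ) = (p-1)*(x/3) * (u x ^ p * (u x ^ p)⁻¹) - (p-1)/6*(2*x) := by
            rw [h2]; ring
        _ ≤ u1 x * (1 - p) * (u x ^ p)⁻¹ - (p - 1) / 6 * (2 * x) := by
            have := mul_le_mul_of_nonneg_right h4 h3.le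
            nlinarith
  have hgrow : ∀ r : ℝ, 0 ≤ r → 1 + (p - 1) / 6 * r ^ 2 ≤ u r ^ (1 - p) := by
    intro r hr
    have := hφmono self_mem_Ici hr hr
    simp only [hu0, Real.one_rpow] at this
    linarith
  -- decay estimate
  set q : ℝ := 2 / (p - 1) with hqdef
  set C : ℝ := (6 / (p - 1)) ^ (1 / (p - 1)) with hCdef
  have hp1' : (0:ℝ) < p - 1 := by linarith
  have hCpos : 0 < C := Real.rpow_pos_of_pos (by positivity) _
  have hqpos : 0 < q := by positivity
  have hqhalf : 1 / 2 < q := by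
    rw [hqdef, div_lt_div_iff₀ (by norm_num) hp1']
    linarith
  have hdecay : ∀ r : ℝ, 1 ≤ r → u r ≤ C * r ^ (-q) := by
    intro r hr
    have hr0 : (0:ℝ) < r := by linarith
    have hM : (0:ℝ) < (p - 1) / 6 * r ^ 2 := by positivity
    have h1 : (p - 1) / 6 * r ^ 2 ≤ u r ^ (1 - p) := by
      have := hgrow r hr0.le
      linarith
    have h2 := Real.rpow_le_rpow_of_nonpos hM h1
      (neg_nonpos.mpr (by positivity : (0:ℝ) ≤ 1 / (p - 1)))
    have hz : (1 - p) * (-(1 / (p - 1))) = 1 := by field_simp; ring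
    rw [← Real.rpow_mul (hpos r hr0.le).le, hz, Real.rpow_one] at h2
    calc u r ≤ ((p - 1) / 6 * r ^ 2) ^ (-(1 / (p - 1))) := h2
      _ = C * r ^ (-q) := by
          rw [Real.mul_rpow (by positivity) (by positivity)]
          congr 1
          · rw [Real.rpow_neg (by positivity), hCdef, ← Real.inv_rpow (by positivity), inv_div]
          · rw [← Real.rpow_natCast r 2, ← Real.rpow_mul hr0.le]
            congr 1
            rw [hqdef]
            push_cast
            field_simp
  -- step E : bound on -u1 for r ≥ 1
  set q' : ℝ := (min q 1 + 1 / 2) / 2 with hq'def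
  have hmin : 1 / 2 < min q 1 := lt_min hqhalf (by norm_num)
  have hq'half : 1 / 2 < q' := by rw [hq'def]; linarith
  have hq'lt1 : q' < 1 := by
    have : min q 1 ≤ 1 := min_le_right _ _
    rw [hq'def]; linarith
  have hq'q : q' < q := by
    have h1 : min q 1 ≤ q := min_le_left _ _
    rw [hq'def]; linarith
  have hq'pos : 0 < q' := by linarith
  set B : ℝ := (1 + b) * C ^ p / (1 - q') with hBdef
  have hBpos : 0 < B := by
    rw [hBdef]
    have : (0:ℝ) < C ^ p := Real.rpow_pos_of_pos hCpos p
    have h1 : (0:ℝ) < 1 - q' := by linarith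
    positivity
  -- pointwise bound on the nonlinearity
  have hfb : ∀ r : ℝ, 1 ≤ r → u r ^ p + b * u r ^ 5 ≤ (1 + b) * C ^ p * r ^ (-q' - 2) := by
    intro r hr
    have hr0 : (0:ℝ) < r := by linarith
    have h1 : u r ^ p ≤ C ^ p * r ^ (-q' - 2) := by
      calc u r ^ p ≤ (C * r ^ (-q)) ^ p :=
            Real.rpow_le_rpow (hpos r hr0.le).le (hdecay r hr) (by linarith)
        _ = C ^ p * r ^ (-q * p) := by
            rw [Real.mul_rpow hCpos.le (Real.rpow_nonneg hr0.le _),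
              ← Real.rpow_mul hr0.le]
        _ ≤ C ^ p * r ^ (-q' - 2) := by
            have hCp : (0:ℝ) < C ^ p := Real.rpow_pos_of_pos hCpos p
            have hqp : -q * p ≤ -q' - 2 := by
              have : q * p = q + 2 := by
                rw [hqdef]; field_simp; ring
              nlinarith
            exact mul_le_mul_of_nonneg_left
              (Real.rpow_le_rpow_of_exponent_le hr hqp) hCp.le
    have h2 : u r ^ 5 ≤ u r ^ p := by
      rw [← Real.rpow_natCast (u r) 5]
      exact Real.rpow_le_rpow_of_exponent_ge (hpos r hr0.le) (hule1 r hr0.le)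
        (by push_cast; linarith)
    have h3 : b * u r ^ 5 ≤ b * u r ^ p := mul_le_mul_of_nonneg_left h2 hb
    have h4 : u r ^ p + b * u r ^ 5 ≤ (1 + b) * u r ^ p := by linarith
    refine h4.trans ?_
    calc (1 + b) * u r ^ p ≤ (1 + b) * (C ^ p * r ^ (-q' - 2)) :=
          mul_le_mul_of_nonneg_left h1 (by linarith)
      _ = (1 + b) * C ^ p * r ^ (-q' - 2) := by ring
  -- monotone quantity on [1, ∞)
  have hm' : ∀ x : ℝ, 1 < x →
      HasDerivAt (fun y : ℝ => y ^ 2 * u1 y + B * y ^ (1 - q'))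
        (-(x ^ 2 * (u x ^ p + b * u x ^ 5)) + B * ((1 - q') * x ^ (1 - q' - 1))) x := by
    intro x hx
    have hx0 : (0:ℝ) < x := by linarith
    refine (hg' x hx0).add ?_
    exact (Real.hasDerivAt_rpow_const (Or.inl hx0.ne')).const_mul B
  have hmmono : MonotoneOn (fun y : ℝ => y ^ 2 * u1 y + B * y ^ (1 - q')) (Ici 1) := by
    refine monotoneOn_of_deriv_nonneg (convex_Ici 1)
      ((hgcont.mono (Ici_subset_Ici.mpr zero_le_one)).add
        (continuousOn_const.mul (continuousOn_id.rpow_const fun x hx =>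
          Or.inl (ne_of_gt (lt_of_lt_of_le zero_lt_one hx))))) ?_ ?_
    · intro x hx
      rw [interior_Ici] at hx
      exact (hm' x hx).differentiableAt.differentiableWithinAt
    · intro x hx
      rw [interior_Ici] at hx
      rw [(hm' x hx).deriv]
      have hx' : (1:ℝ) < x := hx
      have hx0 : (0:ℝ) < x := by linarith
      have key : x ^ 2 * (u x ^ p + b * u x ^ 5) ≤ B * ((1 - q') * x ^ (1 - q' - 1)) := by
        have h1 := hfb x hx.le
        have h2 : x ^ 2 * (u x ^ p + b * u x ^ 5) ≤ x ^ 2 * ((1 + b) * C ^ p * x ^ (-q' - 2)) :=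
          mul_le_mul_of_nonneg_left h1 (pow_pos hx0 2).le
        have h3 : x ^ 2 * ((1 + b) * C ^ p * x ^ (-q' - 2)) = B * ((1 - q') * x ^ (1 - q' - 1)) := by
          have e1 : (x:ℝ) ^ 2 * x ^ (-q' - 2) = x ^ (1 - q' - 1) := by
            rw [← Real.rpow_natCast x 2, ← Real.rpow_add hx0]
            congr 1
            push_cast
            ring
          have h1q : (1:ℝ) - q' ≠ 0 := by
            have : q' < 1 := hq'lt1
            linarith
          have e2 : B * ((1 - q') * x ^ (1 - q' - 1)) = (1 + b) * C ^ p * x ^ (1 - q' - 1) := by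
            rw [hBdef]; field_simp
          rw [e2]
          calc x ^ 2 * ((1 + b) * C ^ p * x ^ (-q' - 2))
              = (1 + b) * C ^ p * (x ^ 2 * x ^ (-q' - 2)) := by ring
            _ = (1 + b) * C ^ p * x ^ (1 - q' - 1) := by rw [e1]
        linarith [h2, le_of_eq h3]
      linarith
  have hu1bound : ∀ x : ℝ, 1 ≤ x → -u1 x ≤ (-u1 1 + B * x ^ (1 - q')) / x ^ 2 := by
    intro x hx
    have hx0 : (0:ℝ) < x := by linarith
    have h1 := hmmono self_mem_Ici hx hx
    simp only [one_pow, one_mul, Real.one_rpow, mul_one] at h1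
    -- h1 : u1 1 + B ≤ x ^ 2 * u1 x + B * x ^ (1 - q')
    rw [div_eq_inv_mul, le_inv_mul_iff₀ (pow_pos hx0 2)]
    have hX : (0:ℝ) < x ^ (1 - q') := Real.rpow_pos_of_pos hx0 _
    nlinarith
  -- step F : Pohozaev monotone quantity
  have hdu1' : ∀ r : ℝ, 0 < r →
      HasDerivAt u1 (-(2 / r * u1 r + u r ^ p + b * u r ^ 5)) r := by
    intro r hr
    have := hdu1 r hr
    rwa [hode1 r hr] at this
  obtain ⟨c, hcdef⟩ : ∃ c : ℝ, c = 3 / (p + 1) - 1 / 2 := ⟨_, rfl⟩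
  have hcpos : 0 < c := by
    have h1 : (1:ℝ) / 2 < 3 / (p + 1) := by
      rw [div_lt_div_iff₀ (by norm_num) (by linarith : (0:ℝ) < p + 1)]
      linarith
    rw [hcdef]; linarith
  obtain ⟨P, hPdef⟩ : ∃ P : ℝ → ℝ, P = fun r => r ^ 3 * (u1 r ^ 2 / 2
      + u r ^ (p + 1) / (p + 1) + b * u r ^ 6 / 6)
    + 1 / 2 * (r ^ 2 * (u r * u1 r)) := ⟨_, rfl⟩
  have hP' : ∀ r : ℝ, 0 < r → HasDerivAt P (c * (r ^ 2 * u r ^ (p + 1))) r := by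
    intro r hr
    rw [hPdef]
    have hA := hdu r hr
    have hB := hdu1' r hr
    have hp1ne : p + 1 ≠ 0 := by linarith
    have e1 : u r ^ (p + 1) = u r ^ p * u r := by
      rw [Real.rpow_add (hpos r hr.le), Real.rpow_one]
    have h1 : HasDerivAt (fun x => u1 x ^ 2 / 2)
        (u1 r * -(2 / r * u1 r + u r ^ p + b * u r ^ 5)) r := by
      have := (hB.pow 2).div_const 2
      refine this.congr_deriv ?_
      push_cast
      ring
    have h2 : HasDerivAt (fun x => u x ^ (p + 1) / (p + 1)) (u r ^ p * u1 r) r := by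
      have h2' : HasDerivAt (fun x : ℝ => u x ^ (p + 1))
          (u1 r * (p + 1) * u r ^ (p + 1 - 1)) r :=
        hA.rpow_const (Or.inl (hupos' r hr))
      have e : u r ^ (p + 1 - 1) = u r ^ p := by norm_num
      rw [e] at h2'
      have := h2'.div_const (p + 1)
      refine this.congr_deriv ?_
      field_simp
    have h3 : HasDerivAt (fun x => b * u x ^ 6 / 6) (b * u r ^ 5 * u1 r) r := by
      have := ((hA.pow 6).const_mul b).div_const 6
      refine this.congr_deriv ?_
      push_cast
      ring
    have houter := (hasDerivAt_pow 3 r).mul ((h1.add h2).add h3)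
    have hlast := ((hasDerivAt_pow 2 r).mul (hA.mul hB)).const_mul (1 / 2 : ℝ)
    have hsum := houter.add hlast
    refine hsum.congr_deriv ?_
    simp only [Pi.add_apply, Pi.mul_apply]
    rw [hcdef, e1]
    have hrne : r ≠ 0 := hr.ne'
    push_cast
    field_simp
    ring
  have hPcont : ContinuousOn P (Ici 0) := by
    have hup1cont : ContinuousOn (fun x : ℝ => u x ^ (p + 1)) (Ici 0) :=
      hucont.rpow_const (fun x hx => Or.inl (hpos x hx).ne')
    rw [hPdef]
    exact ((continuous_pow 3).continuousOn.mul
      ((((hu1cont.pow 2).div_const 2).add (hup1cont.div_const (p + 1))).add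
        ((continuousOn_const.mul (hucont.pow 6)).div_const 6))).add
      (continuousOn_const.mul ((continuous_pow 2).continuousOn.mul (hucont.mul hu1cont)))
  have hPmono : StrictMonoOn P (Ici 0) := by
    refine strictMonoOn_of_deriv_pos (convex_Ici 0) hPcont ?_
    intro x hx
    rw [interior_Ici] at hx
    rw [(hP' x hx).deriv]
    have h1 : (0:ℝ) < u x ^ (p + 1) := Real.rpow_pos_of_pos (hpos x hx.le) _
    have h2 : (0:ℝ) < x ^ 2 := pow_pos hx 2
    positivity
  have hP0 : P 0 = 0 := by rw [hPdef]; norm_num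
  have hP1pos : 0 < P 1 := by
    have := hPmono self_mem_Ici (by norm_num : (1:ℝ) ∈ Ici (0:ℝ)) one_pos
    rwa [hP0] at this
  -- tail estimate for P
  obtain ⟨G, hGdef⟩ : ∃ G : ℝ, G = -u1 1 := ⟨_, rfl⟩
  have hGpos : 0 < G := by rw [hGdef]; linarith [hu1neg 1 one_pos]
  have hCp1 : (0:ℝ) < C ^ (p + 1) := Real.rpow_pos_of_pos hCpos _
  have hPtail : ∀ r : ℝ, 1 ≤ r → P r ≤ G ^ 2 * r ^ (-(1:ℝ))
      + (B ^ 2 + C ^ (p + 1) + b * C ^ (p + 1)) * r ^ (-(2 * q' - 1)) := by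
    intro r hr
    have hr0 : (0:ℝ) < r := by linarith
    have hX : (0:ℝ) < r ^ (1 - q') := Real.rpow_pos_of_pos hr0 _
    have hY : (0:ℝ) < r ^ (-(2 * q' - 1)) := Real.rpow_pos_of_pos hr0 _
    have t0 : 1 / 2 * (r ^ 2 * (u r * u1 r)) ≤ 0 := by
      have h1 := hu1neg r hr0
      have h2 := hpos r hr0.le
      nlinarith [mul_pos (pow_pos hr0 2) (mul_pos h2 (neg_pos.2 h1))]
    have hbd := hu1bound r hr
    rw [← hGdef] at hbd
    have t1 : u1 r ^ 2 ≤ ((G + B * r ^ (1 - q')) / r ^ 2) ^ 2 := by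
      have h1 : 0 ≤ -u1 r := by linarith [hu1neg r hr0]
      calc u1 r ^ 2 = (-u1 r) ^ 2 := by ring
        _ ≤ ((G + B * r ^ (1 - q')) / r ^ 2) ^ 2 := pow_le_pow_left₀ h1 hbd 2
    have t1' : r ^ 3 * (u1 r ^ 2 / 2) ≤ G ^ 2 * r ^ (-(1:ℝ)) + B ^ 2 * r ^ (-(2 * q' - 1)) := by
      have e1 : r ^ 3 * (((G + B * r ^ (1 - q')) / r ^ 2) ^ 2 / 2)
          = (G + B * r ^ (1 - q')) ^ 2 / (2 * r) := by
        field_simp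
      have h2 : r ^ 3 * (u1 r ^ 2 / 2) ≤ (G + B * r ^ (1 - q')) ^ 2 / (2 * r) := by
        rw [← e1]
        have := mul_le_mul_of_nonneg_left
          (by linarith [t1] : u1 r ^ 2 / 2 ≤ ((G + B * r ^ (1 - q')) / r ^ 2) ^ 2 / 2)
          (pow_pos hr0 3).le
        linarith
      have h3 : (G + B * r ^ (1 - q')) ^ 2 / (2 * r)
          ≤ (G ^ 2 + B ^ 2 * (r ^ (1 - q')) ^ 2) / r := by
        rw [div_le_div_iff₀ (by linarith) hr0]
        nlinarith [sq_nonneg (G - B * r ^ (1 - q')), mul_pos hGpos (mul_pos hBpos hX)]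
      have e2 : (G ^ 2 + B ^ 2 * (r ^ (1 - q')) ^ 2) / r
          = G ^ 2 * r ^ (-(1:ℝ)) + B ^ 2 * r ^ (-(2 * q' - 1)) := by
        have e3 : (r ^ (1 - q')) ^ 2 = r ^ ((1 - q') * 2) := by
          rw [← Real.rpow_natCast (r ^ (1 - q')) 2, ← Real.rpow_mul hr0.le]
          norm_num
        rw [e3, Real.rpow_neg_one,
          show -(2 * q' - 1) = (1 - q') * 2 - 1 by ring,
          Real.rpow_sub hr0, Real.rpow_one]
        field_simp
      linarith [h2, h3, le_of_eq e2]
    have t2a : u r ^ (p + 1) ≤ C ^ (p + 1) * r ^ (-q * (p + 1)) := by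
      calc u r ^ (p + 1) ≤ (C * r ^ (-q)) ^ (p + 1) :=
            Real.rpow_le_rpow (hpos r hr0.le).le (hdecay r hr) (by linarith)
        _ = C ^ (p + 1) * r ^ (-q * (p + 1)) := by
            rw [Real.mul_rpow hCpos.le (Real.rpow_nonneg hr0.le _), ← Real.rpow_mul hr0.le]
    have hqe : -q * (p + 1) ≤ -(2 * q' - 1) - 3 := by
      have h1 : q * p = q + 2 := by rw [hqdef]; field_simp; ring
      nlinarith [hq'q]
    have e4 : (r:ℝ) ^ (3:ℕ) * r ^ (-(2 * q' - 1) - 3) = r ^ (-(2 * q' - 1)) := by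
      rw [← Real.rpow_natCast r 3, ← Real.rpow_add hr0]
      congr 1
      push_cast
      ring
    have t2b : r ^ 3 * u r ^ (p + 1) ≤ C ^ (p + 1) * r ^ (-(2 * q' - 1)) := by
      calc r ^ 3 * u r ^ (p + 1) ≤ r ^ 3 * (C ^ (p + 1) * r ^ (-q * (p + 1))) :=
            mul_le_mul_of_nonneg_left t2a (pow_pos hr0 3).le
        _ ≤ r ^ 3 * (C ^ (p + 1) * r ^ (-(2 * q' - 1) - 3)) := by
            have h5 := Real.rpow_le_rpow_of_exponent_le hr hqe
            have h6 := mul_le_mul_of_nonneg_left h5 hCp1.le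
            exact mul_le_mul_of_nonneg_left h6 (pow_pos hr0 3).le
        _ = C ^ (p + 1) * r ^ (-(2 * q' - 1)) := by rw [← e4]; ring
    have t2 : r ^ 3 * (u r ^ (p + 1) / (p + 1)) ≤ C ^ (p + 1) * r ^ (-(2 * q' - 1)) := by
      have h2 : (0:ℝ) < u r ^ (p + 1) := Real.rpow_pos_of_pos (hpos r hr0.le) _
      have h1 : u r ^ (p + 1) / (p + 1) ≤ u r ^ (p + 1) :=
        div_le_self h2.le (by linarith)
      calc r ^ 3 * (u r ^ (p + 1) / (p + 1)) ≤ r ^ 3 * u r ^ (p + 1) :=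
            mul_le_mul_of_nonneg_left h1 (pow_pos hr0 3).le
        _ ≤ C ^ (p + 1) * r ^ (-(2 * q' - 1)) := t2b
    have t3a : u r ^ 6 ≤ u r ^ (p + 1) := by
      rw [← Real.rpow_natCast (u r) 6]
      exact Real.rpow_le_rpow_of_exponent_ge (hpos r hr0.le) (hule1 r hr0.le)
        (by push_cast; linarith)
    have t3 : r ^ 3 * (b * u r ^ 6 / 6) ≤ b * C ^ (p + 1) * r ^ (-(2 * q' - 1)) := by
      have h0 : (0:ℝ) ≤ u r ^ 6 := (pow_pos (hpos r hr0.le) 6).le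
      have h1 : b * u r ^ 6 / 6 ≤ b * u r ^ (p + 1) := by
        have h2 := mul_le_mul_of_nonneg_left t3a hb
        nlinarith [mul_nonneg hb h0]
      calc r ^ 3 * (b * u r ^ 6 / 6) ≤ r ^ 3 * (b * u r ^ (p + 1)) :=
            mul_le_mul_of_nonneg_left h1 (pow_pos hr0 3).le
        _ = b * (r ^ 3 * u r ^ (p + 1)) := by ring
        _ ≤ b * (C ^ (p + 1) * r ^ (-(2 * q' - 1))) := mul_le_mul_of_nonneg_left t2b hb
        _ = b * C ^ (p + 1) * r ^ (-(2 * q' - 1)) := by ring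
    have hPr : P r = r ^ 3 * (u1 r ^ 2 / 2 + u r ^ (p + 1) / (p + 1) + b * u r ^ 6 / 6)
        + 1 / 2 * (r ^ 2 * (u r * u1 r)) := by rw [hPdef]
    rw [hPr]
    have expand : r ^ 3 * (u1 r ^ 2 / 2 + u r ^ (p + 1) / (p + 1) + b * u r ^ 6 / 6)
        = r ^ 3 * (u1 r ^ 2 / 2) + r ^ 3 * (u r ^ (p + 1) / (p + 1))
          + r ^ 3 * (b * u r ^ 6 / 6) := by ring
    rw [expand]
    linarith [t0, t1', t2, t3]
  -- contradiction
  have hW : Tendsto (fun r : ℝ => G ^ 2 * r ^ (-(1:ℝ))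
      + (B ^ 2 + C ^ (p + 1) + b * C ^ (p + 1)) * r ^ (-(2 * q' - 1))) atTop (nhds (0:ℝ)) := by
    have w1 := (tendsto_rpow_neg_atTop one_pos).const_mul (G ^ 2)
    have w2 := (tendsto_rpow_neg_atTop (by linarith : (0:ℝ) < 2 * q' - 1)).const_mul
      (B ^ 2 + C ^ (p + 1) + b * C ^ (p + 1))
    have := w1.add w2
    simpa using this
  obtain ⟨r, hrP, hr2⟩ :=
    ((hW.eventually_lt_const hP1pos).and (eventually_ge_atTop (2:ℝ))).exists
  have h1 : P 1 < P r :=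
    hPmono (by norm_num : (1:ℝ) ∈ Ici (0:ℝ)) (by simp only [mem_Ici]; linarith) (by linarith)
  have h2 := hPtail r (by linarith)
  linarith


/-- For `1 < p < 5` and `b ≥ 0`, there is no everywhere positive solution of the radial
limit profile equation `u'' + (2/r) u' + u^p + b u^5 = 0` on `(0,∞)` with `u(0) = 1` and
`u'(0) = 0`, which is `C¹` on `[0,∞)` and `C²` on `(0,∞)`; i.e. every such solution must
change sign on `[0,∞)`. -/
theorem statement11 (p b : ℝ) (hp1 : 1 < p) (hp5 : p < 5) (hb : 0 ≤ b) :
    ¬ ∃ u : ℝ → ℝ,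
      ContDiffOn ℝ 1 u (Ici 0) ∧ ContDiffOn ℝ 2 u (Ioi 0) ∧
      (∀ r : ℝ, 0 ≤ r → 0 < u r) ∧ u 0 = 1 ∧ HasDerivWithinAt u 0 (Ici 0) 0 ∧
      (∀ r : ℝ, 0 < r →
        deriv (deriv u) r + (2 / r) * deriv u r + u r ^ p + b * u r ^ 5 = 0) := by
  rintro ⟨u, hC1, hC2, hpos, hu0, hd0, hode⟩
  exact statement11_aux p b hp1 hp5 hb u hC1 hC2 hpos hu0 hd0 hode
end

section
/- Let α > 0 and R₀ > 0, and set Y(r) := √3 · e^{−√α·r}/r for r > 0. Let u : [R₀,∞) → ℝ be continuous on [R₀,∞), twice continuously differentiable on (R₀,∞), with u(r) > 0 for all r ≥ R₀, and suppose that −u″(r) − (2/r)·u′(r) + α·u(r) ≥ 0 for all r > R₀. Then u(r) ≥ (u(R₀)/Y(R₀))·Y(r) for all r ≥ R₀. -/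
open Filter Set

/-- For `α > 0` and `R₀ > 0`, with `Y(r) = √3 e^{-√α r}/r`: every positive radial
supersolution `u` of `-u'' - (2/r) u' + α u ≥ 0` on `(R₀,∞)`, continuous on `[R₀,∞)` and
`C²` on `(R₀,∞)`, dominates the normalized barrier: `u(r) ≥ (u(R₀)/Y(R₀)) Y(r)` on
`[R₀,∞)`. -/
theorem statement15 (α R₀ : ℝ) (hα : 0 < α) (hR₀ : 0 < R₀)
    (u : ℝ → ℝ) (hc : ContinuousOn u (Ici R₀)) (hu : ContDiffOn ℝ 2 u (Ioi R₀))
    (hpos : ∀ r : ℝ, R₀ ≤ r → 0 < u r)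
    (hsuper : ∀ r : ℝ, R₀ < r →
      0 ≤ -deriv (deriv u) r - (2 / r) * deriv u r + α * u r) :
    ∀ r : ℝ, R₀ ≤ r →
      (u R₀ / (Real.sqrt 3 * Real.exp (-Real.sqrt α * R₀) / R₀)) *
        (Real.sqrt 3 * Real.exp (-Real.sqrt α * r) / r) ≤ u r := by
  intro r hr
  set β := Real.sqrt α with hβdef
  have hβ : 0 < β := Real.sqrt_pos.mpr hα
  have hαeq : α = β ^ 2 := (Real.sq_sqrt hα.le).symm
  set g : ℝ → ℝ := fun x => x * u x * Real.exp (β * x) with hgdef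
  set g1 : ℝ → ℝ := fun x => (u x + x * deriv u x + β * (x * u x)) * Real.exp (β * x) with hg1def
  set h : ℝ → ℝ := fun x => Real.exp (-β * x) * (u x + x * deriv u x + β * (x * u x)) with hhdef
  -- differentiability of u and deriv u
  have hdu : ∀ s ∈ Ioi R₀, HasDerivAt u (deriv u s) s := by
    intro s hs
    exact ((hu.differentiableOn (by norm_num)).differentiableAt
      (isOpen_Ioi.mem_nhds hs)).hasDerivAt
  have hdu' : ∀ s ∈ Ioi R₀, HasDerivAt (deriv u) (deriv (deriv u) s) s := by
    intro s hs
    have h1 : ContDiffOn ℝ 1 (deriv u) (Ioi R₀) :=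
      hu.deriv_of_isOpen isOpen_Ioi (by norm_num)
    exact ((h1.differentiableOn (by norm_num)).differentiableAt
      (isOpen_Ioi.mem_nhds hs)).hasDerivAt
  have hexp : ∀ (c x : ℝ), HasDerivAt (fun y => Real.exp (c * y)) (c * Real.exp (c * x)) x := by
    intro c x
    have := (Real.hasDerivAt_exp (c * x)).comp x ((hasDerivAt_id x).const_mul c)
    exact this.congr_deriv (by ring)
  have hg : ∀ s ∈ Ioi R₀, HasDerivAt g (g1 s) s := by
    intro s hs
    have h1 : HasDerivAt (fun x => x * u x) (1 * u s + s * deriv u s) s :=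
      (hasDerivAt_id s).mul (hdu s hs)
    have := h1.mul (hexp β s)
    simp only [hgdef, hg1def]
    exact this.congr_deriv (by ring)
  have hgh : ∀ s, g1 s = Real.exp (2 * β * s) * h s := by
    intro s
    simp only [hg1def, hhdef]
    rw [show Real.exp (2*β*s) * (Real.exp (-β*s) * (u s + s * deriv u s + β * (s * u s)))
        = (Real.exp (2*β*s) * Real.exp (-β*s)) * (u s + s * deriv u s + β * (s * u s)) by ring,
      ← Real.exp_add]
    ring_nf
  -- derivative of h
  have hh : ∀ s ∈ Ioi R₀, HasDerivAt h
      (Real.exp (-β * s) * (s * deriv (deriv u) s + 2 * deriv u s - α * (s * u s))) s := by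
    intro s hs
    have hP : HasDerivAt (fun x => u x + x * deriv u x + β * (x * u x))
        (deriv u s + (1 * deriv u s + s * deriv (deriv u) s)
          + β * (1 * u s + s * deriv u s)) s := by
      exact ((hdu s hs).add ((hasDerivAt_id s).mul (hdu' s hs))).add
        (((hasDerivAt_id s).mul (hdu s hs)).const_mul β)
    have := (hexp (-β) s).mul hP
    simp only [hhdef]
    exact this.congr_deriv (by rw [hαeq]; ring)
  have hhnonpos : ∀ s ∈ Ioi R₀, deriv h s ≤ 0 := by
    intro s hs
    rw [(hh s hs).deriv]
    have hs0 : (0:ℝ) < s := hR₀.trans hs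
    have h2 := hsuper s hs
    have e : -deriv (deriv u) s - 2 / s * deriv u s + α * u s
        = (-(s * deriv (deriv u) s) - 2 * deriv u s + α * (s * u s)) / s := by
      field_simp
    rw [e] at h2
    have h4 := mul_nonneg hs0.le h2
    have e2 : s * ((-(s * deriv (deriv u) s) - 2 * deriv u s + α * (s * u s)) / s)
        = -(s * deriv (deriv u) s) - 2 * deriv u s + α * (s * u s) := by
      field_simp
    rw [e2] at h4
    have key : s * deriv (deriv u) s + 2 * deriv u s - α * (s * u s) ≤ 0 := by linarith
    exact mul_nonpos_of_nonneg_of_nonpos (Real.exp_pos _).le key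
  have hdiffh : ∀ s ∈ Ioi R₀, DifferentiableAt ℝ h s := fun s hs => (hh s hs).differentiableAt
  have gpos : ∀ s, R₀ ≤ s → 0 < g s := by
    intro s hs
    exact mul_pos (mul_pos (hR₀.trans_le hs) (hpos s hs)) (Real.exp_pos _)
  have gcont : ContinuousOn g (Ici R₀) :=
    (continuousOn_id.mul hc).mul (Real.continuous_exp.comp (continuous_const.mul continuous_id)).continuousOn
  -- main claim: g R₀ ≤ g r
  have main : g R₀ ≤ g r := by
    by_cases hcase : ∀ s, R₀ < s → 0 ≤ h s
    · have gmono : MonotoneOn g (Ici R₀) := by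
        apply monotoneOn_of_deriv_nonneg (convex_Ici R₀) gcont
        · intro x hx
          rw [interior_Ici] at hx
          exact ((hg x hx).differentiableAt).differentiableWithinAt
        · intro x hx
          rw [interior_Ici] at hx
          rw [(hg x hx).deriv, hgh]
          exact mul_nonneg (Real.exp_pos _).le (hcase x hx)
      exact gmono self_mem_Ici hr hr
    · exfalso
      push_neg at hcase
      obtain ⟨r₁, hr₁, hneg⟩ := hcase
      have hanti : AntitoneOn h (Ici r₁) := by
        apply antitoneOn_of_deriv_nonpos (convex_Ici r₁)
        · intro x hx
          exact (hdiffh x (hr₁.trans_le hx)).continuousAt.continuousWithinAt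
        · intro x hx
          rw [interior_Ici] at hx
          exact (hdiffh x (hr₁.trans hx)).differentiableWithinAt
        · intro x hx
          rw [interior_Ici] at hx
          exact hhnonpos x (hr₁.trans hx)
      set φ : ℝ → ℝ := fun x => 2 * β * g x - h r₁ * Real.exp (2 * β * x) with hφdef
      have hφanti : AntitoneOn φ (Ici r₁) := by
        have hφd : ∀ x ∈ Ioi R₀, HasDerivAt φ
            (2 * β * g1 x - h r₁ * (2 * β * Real.exp (2 * β * x))) x := by
          intro x hx
          exact ((hg x hx).const_mul (2*β)).sub ((hexp (2*β) x).const_mul (h r₁))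
        apply antitoneOn_of_deriv_nonpos (convex_Ici r₁)
        · intro x hx
          exact (hφd x (hr₁.trans_le hx)).differentiableAt.continuousAt.continuousWithinAt
        · intro x hx
          rw [interior_Ici] at hx
          exact (hφd x (hr₁.trans hx)).differentiableAt.differentiableWithinAt
        · intro x hx
          rw [interior_Ici] at hx
          rw [(hφd x (hr₁.trans hx)).deriv, hgh]
          have hx1 : h x ≤ h r₁ := hanti self_mem_Ici (mem_Ici.mpr (le_of_lt hx)) (le_of_lt hx)
          nlinarith [Real.exp_pos (2*β*x), mul_le_mul_of_nonneg_left hx1 (Real.exp_pos (2*β*x)).le]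
      -- choose large R
      set c : ℝ := -h r₁ with hcdef
      have hc : 0 < c := by simp [hcdef]; linarith
      set M : ℝ := 2 * β * g r₁ / c + Real.exp (2 * β * r₁) + 1 with hMdef
      have hgr₁ : 0 < g r₁ := gpos r₁ hr₁.le
      have hM : 0 < M := by
        have h1 : 0 < 2 * β * g r₁ / c := div_pos (mul_pos (by positivity) hgr₁) hc
        have h2 := Real.exp_pos (2*β*r₁)
        rw [hMdef]; linarith
      set R : ℝ := max r₁ (Real.log M / (2 * β)) with hRdef
      have hRr₁ : r₁ ≤ R := le_max_left _ _
      have hER : M ≤ Real.exp (2 * β * R) := by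
        have h1 : Real.log M ≤ 2 * β * R := by
          have : Real.log M / (2*β) ≤ R := le_max_right _ _
          calc Real.log M = 2*β * (Real.log M / (2*β)) := by field_simp
          _ ≤ 2*β*R := by nlinarith
        calc M = Real.exp (Real.log M) := (Real.exp_log hM).symm
        _ ≤ Real.exp (2*β*R) := Real.exp_le_exp.mpr h1
      have hbound := hφanti self_mem_Ici hRr₁ hRr₁
      simp only [hφdef] at hbound
      have hgR : 0 < g R := gpos R (hr₁.trans_le hRr₁).le
      have hid : c * (2 * β * g r₁ / c) = 2 * β * g r₁ := by field_simp
      have hmul := mul_le_mul_of_nonneg_left hER hc.le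
      -- c*M ≤ c*E, with c*M = 2βg r₁ + c E₁ + c
      have hgR2 : 0 < 2 * β * g R := mul_pos (by positivity) hgR
      have hcM : c * M = c * (2 * β * g r₁ / c) + c * Real.exp (2 * β * r₁) + c * 1 := by
        rw [hMdef]; ring
      rw [hid, mul_one] at hcM
      have e3 : c * Real.exp (2*β*R) = -(h r₁ * Real.exp (2*β*R)) := by rw [hcdef]; ring
      have e4 : c * Real.exp (2*β*r₁) = -(h r₁ * Real.exp (2*β*r₁)) := by rw [hcdef]; ring
      linarith [hmul, hcM, hbound, hneg, hgR2, e3, e4]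
  -- conclude
  have hr0 : 0 < r := hR₀.trans_le hr
  have h3 : (0:ℝ) < Real.sqrt 3 := Real.sqrt_pos.mpr (by norm_num)
  have hE₀ : (0:ℝ) < Real.exp (β * R₀) := Real.exp_pos _
  have hE : (0:ℝ) < Real.exp (β * r) := Real.exp_pos _
  have e1 : Real.exp (-β * R₀) = (Real.exp (β * R₀))⁻¹ := by
    rw [← Real.exp_neg]; ring_nf
  have e2 : Real.exp (-β * r) = (Real.exp (β * r))⁻¹ := by
    rw [← Real.exp_neg]; ring_nf
  rw [e1, e2]
  rw [div_mul_eq_mul_div, div_le_iff₀ (by positivity)]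
  simp only [hgdef] at main
  have expand : u R₀ / (Real.sqrt 3 * (Real.exp (β*R₀))⁻¹ / R₀) * (Real.sqrt 3 * (Real.exp (β*r))⁻¹)
      = u R₀ * R₀ * Real.exp (β*R₀) * (Real.exp (β*r))⁻¹ := by
    field_simp
  field_simp
  nlinarith [mul_le_mul_of_nonneg_left main h3.le, h3, hE₀.le, hE.le, mul_pos hE₀ hE]
end

section
/- Let 1 < p < 3, α > 0, β ≥ 0 and 0 < ε < 1. Let u : (0,∞) → ℝ be twice continuously differentiable with u(r) > 0 and u′(r) < 0 for all r > 0, u(r) → 0 as r → ∞, and u″(r) + (2/r)·u′(r) = α·u(r) − β·u(r)^p − u(r)^5 for all r > 0. Let R > 0 satisfy (β/α)·u(R)^{p−1} + (1/α)·u(R)⁴ ≤ ε. Then, with Ỹ(r) := e^{−√((1−ε)α)·r}/r, one has u(r) ≤ (u(R)/Ỹ(R))·Ỹ(r) for all r ≥ R. -/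
open Filter Set Topology

/-- If `f` has derivative `f'` on `[s,∞)` and `f' ≥ 0` there, `f` is monotone there. -/
lemma mono_aux16 (s : ℝ) (f f' : ℝ → ℝ)
    (hd : ∀ r, s ≤ r → HasDerivAt f (f' r) r)
    (h0 : ∀ r, s < r → 0 ≤ f' r) :
    ∀ r, s ≤ r → f s ≤ f r := by
  intro r hr
  have hmono : MonotoneOn f (Set.Ici s) := by
    apply monotoneOn_of_deriv_nonneg (convex_Ici s)
    · exact fun x hx => (hd x hx).continuousAt.continuousWithinAt
    · intro x hx
      rw [interior_Ici] at hx
      exact (hd x (le_of_lt hx)).differentiableAt.differentiableWithinAt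
    · intro x hx
      rw [interior_Ici] at hx
      rw [(hd x hx.le).deriv]
      exact h0 x hx
  exact hmono self_mem_Ici hr hr

/-- ODE comparison + blow-up lemma: if `h'' ≥ k² h` on `[R,∞)`, `h R = 0` and `h r₀ > 0`,
then `h` grows at least quadratically from some point. -/
lemma grow_aux16 (k R r₀ : ℝ) (hk : 0 < k) (h h' h'' : ℝ → ℝ)
    (hd1 : ∀ r, R ≤ r → HasDerivAt h (h' r) r)
    (hd2 : ∀ r, R ≤ r → HasDerivAt h' (h'' r) r)
    (hineq : ∀ r, R ≤ r → k ^ 2 * h r ≤ h'' r)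
    (hR0 : h R = 0) (hr₀ : R ≤ r₀) (hpos : 0 < h r₀) :
    ∃ s c, R ≤ s ∧ 0 < c ∧ ∀ r, s ≤ r → c * (r - s) ^ 2 ≤ h r := by
  -- maximum of h on [R, r₀]
  obtain ⟨s, hsmem, hmax⟩ := isCompact_Icc.exists_isMaxOn (nonempty_Icc.mpr hr₀)
    (fun x hx => (hd1 x hx.1).continuousAt.continuousWithinAt)
  have hsR : R ≤ s := hsmem.1
  have hs_ge : h r₀ ≤ h s := hmax ⟨hr₀, le_rfl⟩
  have hs0 : 0 < h s := lt_of_lt_of_le hpos hs_ge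
  have hRs : R < s := by
    rcases lt_or_eq_of_le hsR with h1 | h1
    · exact h1
    · exfalso; rw [← h1, hR0] at hs0; exact lt_irrefl 0 hs0
  -- derivative at the max point is nonnegative
  have hs' : 0 ≤ h' s := by
    by_contra hneg
    push_neg at hneg
    have hds := hd1 s hsR
    have hslope := hasDerivAt_iff_tendsto_slope.mp hds
    have hle : 𝓝[<] s ≤ 𝓝[≠] s :=
      nhdsWithin_mono _ (fun x hx => ne_of_lt hx)
    have hev : ∀ᶠ x in 𝓝[<] s, slope h s x < 0 :=
      (hslope.mono_left hle).eventually_lt_const hneg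
    have hmem : ∀ᶠ x in 𝓝[<] s, x ∈ Ioo R s :=
      eventually_of_mem (Ioo_mem_nhdsLT_of_mem ⟨hRs, le_rfl⟩) (fun x hx => hx)
    obtain ⟨x, hx1, hx2⟩ := (hev.and hmem).exists
    have hxs : x - s < 0 := by linarith [hx2.2]
    have : 0 < h x - h s := by
      rw [slope_def_field] at hx1
      rcases div_neg_iff.mp hx1 with ⟨h1, h2⟩ | ⟨h1, h2⟩
      · linarith
      · linarith
    have hxle : h x ≤ h s := hmax ⟨hx2.1.le, hx2.2.le.trans hsmem.2⟩
    linarith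
  -- q = h' + k h satisfies (q e^{-kr})' ≥ 0, hence q > 0 on [s,∞)
  have hqs : 0 < h' s + k * h s := by nlinarith [mul_pos hk hs0]
  have hDq : ∀ r, s ≤ r →
      HasDerivAt (fun x => (h' x + k * h x) * Real.exp (-(k * x)))
        ((h'' r + k * h' r) * Real.exp (-(k * r))
          + (h' r + k * h r) * (Real.exp (-(k * r)) * -(k * 1))) r := by
    intro r hr
    have h1 : HasDerivAt (fun x => h' x + k * h x) (h'' r + k * h' r) r :=
      (hd2 r (hsR.trans hr)).add ((hd1 r (hsR.trans hr)).const_mul k)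
    have h2 : HasDerivAt (fun x => Real.exp (-(k * x))) (Real.exp (-(k * r)) * -(k * 1)) r :=
      (((hasDerivAt_id r).const_mul k).neg).exp
    exact h1.mul h2
  have hqpos : ∀ r, s ≤ r → 0 < h' r + k * h r := by
    intro r hr
    have hm := mono_aux16 s (fun x => (h' x + k * h x) * Real.exp (-(k * x))) _ hDq
      (by
        intro x hx
        have hxR : R ≤ x := hsR.trans hx.le
        have hx1 := hineq x hxR
        have he : 0 < Real.exp (-(k * x)) := Real.exp_pos _
        nlinarith) r hr
    have hm' : (h' s + k * h s) * Real.exp (-(k * s)) ≤ (h' r + k * h r) * Real.exp (-(k * r)) := hm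
    have h1 : 0 < (h' s + k * h s) * Real.exp (-(k * s)) := mul_pos hqs (Real.exp_pos _)
    have h2 : 0 < Real.exp (-(k * r)) := Real.exp_pos _
    nlinarith
  -- hence h > 0 on [s,∞)  (via G = h e^{kr})
  have hhpos : ∀ r, s ≤ r → 0 < h r := by
    intro r hr
    have hDG : ∀ x, s ≤ x → HasDerivAt (fun y => h y * Real.exp (k * y))
        (h' x * Real.exp (k * x) + h x * (Real.exp (k * x) * (k * 1))) x := by
      intro x hx
      exact (hd1 x (hsR.trans hx)).mul ((hasDerivAt_id x).const_mul k).exp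
    have hm := mono_aux16 s (fun y => h y * Real.exp (k * y)) _ hDG
      (by
        intro x hx
        have hq := hqpos x hx.le
        have he : 0 < Real.exp (k * x) := Real.exp_pos _
        nlinarith) r hr
    have hm' : h s * Real.exp (k * s) ≤ h r * Real.exp (k * r) := hm
    have h1 : 0 < h s * Real.exp (k * s) := mul_pos hs0 (Real.exp_pos _)
    have h2 : 0 < Real.exp (k * r) := Real.exp_pos _
    nlinarith
  -- h' is nondecreasing on [s,∞), so h' ≥ 0, so h is nondecreasing: h r ≥ h s
  have hd2' : ∀ r, s ≤ r → HasDerivAt h' (h'' r) r := fun r hr => hd2 r (hsR.trans hr)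
  have hh'mono : ∀ r, s ≤ r → h' s ≤ h' r :=
    mono_aux16 s h' h'' hd2' (fun x hx =>
      le_trans (by nlinarith [hhpos x hx.le, sq_nonneg k]) (hineq x (hsR.trans hx.le)))
  have hh'nonneg : ∀ r, s ≤ r → 0 ≤ h' r := fun r hr => le_trans hs' (hh'mono r hr)
  have hhmono : ∀ r, s ≤ r → h s ≤ h r :=
    mono_aux16 s h h' (fun r hr => hd1 r (hsR.trans hr)) (fun x hx => hh'nonneg x hx.le)
  -- ψ = h' - k²·h(s)·(r-s) is nondecreasing on [s,∞)
  have hψ : ∀ r, s ≤ r → k ^ 2 * h s * (r - s) ≤ h' r := by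
    intro r hr
    have hDψ : ∀ x, s ≤ x → HasDerivAt (fun y => h' y - k ^ 2 * h s * (y - s))
        (h'' x - k ^ 2 * h s * 1) x := by
      intro x hx
      exact (hd2' x hx).sub (((hasDerivAt_id x).sub_const s).const_mul (k ^ 2 * h s))
    have hm := mono_aux16 s (fun y => h' y - k ^ 2 * h s * (y - s)) _ hDψ
      (by
        intro x hx
        have h1 := hineq x (hsR.trans hx.le)
        have h2 := hhmono x hx.le
        nlinarith [sq_nonneg k]) r hr
    simp only [sub_self, mul_zero, sub_zero] at hm
    nlinarith [hs']
  -- φ = h - (k²·h(s)/2)·(r-s)² is nondecreasing on [s,∞)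
  refine ⟨s, k ^ 2 * h s / 2, hsR, by positivity, ?_⟩
  intro r hr
  have hDφ : ∀ x, s ≤ x → HasDerivAt (fun y => h y - k ^ 2 * h s / 2 * (y - s) ^ 2)
      (h' x - k ^ 2 * h s / 2 * (2 * (x - s) ^ 1 * 1)) x := by
    intro x hx
    exact (hd1 x (hsR.trans hx)).sub
      ((((hasDerivAt_id x).sub_const s).pow 2).const_mul (k ^ 2 * h s / 2))
  have hm := mono_aux16 s (fun y => h y - k ^ 2 * h s / 2 * (y - s) ^ 2) _ hDφ
    (by
      intro x hx
      have h1 := hψ x hx.le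
      nlinarith) r hr
  simp only [sub_self] at hm
  nlinarith [hs0]



/-- Quadratic lower bound beats decay to zero. -/
lemma final_aux16 (f : ℝ → ℝ) (s c M : ℝ) (hs0 : 0 < s) (hc : 0 < c)
    (hub : ∀ x, s ≤ x → c * (x - s) ^ 2 ≤ x * f x)
    (hM : ∀ x, M ≤ x → f x < 1) : False := by
  obtain ⟨L, hLdef⟩ : ∃ L : ℝ, L = max 1 ((s + 1) / c) := ⟨_, rfl⟩
  obtain ⟨x, hxdef⟩ : ∃ x : ℝ, x = max M (s + L) := ⟨_, rfl⟩
  have hL1 : (1:ℝ) ≤ L := hLdef ▸ le_max_left _ _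
  have hL2 : (s + 1) / c ≤ L := hLdef ▸ le_max_right _ _
  have hcL : s + 1 ≤ L * c := (div_le_iff₀ hc).mp hL2
  have hxs : s + L ≤ x := hxdef ▸ le_max_right _ _
  have hxM : M ≤ x := hxdef ▸ le_max_left _ _
  have hsx : s ≤ x := by linarith
  have hx0 : 0 < x := by linarith
  have hux : f x < 1 := hM x hxM
  have hxu : c * (x - s) ^ 2 ≤ x * f x := hub x hsx
  have e1 : c * L ≤ c * (x - s) := mul_le_mul_of_nonneg_left (by linarith) hc.le
  have e2 : (s + 1) * (x - s) ≤ (c * (x - s)) * (x - s) :=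
    mul_le_mul_of_nonneg_right (by linarith) (by linarith)
  have e3 : s * 1 ≤ s * (x - s) := mul_le_mul_of_nonneg_left (by linarith) hs0.le
  have hgeq : x ≤ c * (x - s) ^ 2 := by nlinarith [e2, e3]
  have e4 : x * f x < x * 1 := mul_lt_mul_of_pos_left hux hx0
  linarith [hgeq, hxu, e4]

/-- For `1 < p < 3`, `α > 0`, `β ≥ 0`, `0 < ε < 1`: let `u` be a positive decreasing `C²`
solution on `(0,∞)` of `u'' + (2/r) u' = α u - β u^p - u^5` with `u(r) → 0`, and let `R > 0`
satisfy `(β/α) u(R)^{p-1} + (1/α) u(R)⁴ ≤ ε`. Then, with `Ỹ(r) = e^{-√((1-ε)α) r}/r`, one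
has the upper barrier bound `u(r) ≤ (u(R)/Ỹ(R)) Ỹ(r)` for `r ≥ R`. -/
theorem statement16 (p α β ε : ℝ) (hp1 : 1 < p) (hp3 : p < 3)
    (hα : 0 < α) (hβ : 0 ≤ β) (hε0 : 0 < ε) (hε1 : ε < 1)
    (u : ℝ → ℝ) (hu : ContDiffOn ℝ 2 u (Ioi 0))
    (hpos : ∀ r : ℝ, 0 < r → 0 < u r) (hdec : ∀ r : ℝ, 0 < r → deriv u r < 0)
    (hlim : Tendsto u atTop (nhds 0))
    (hode : ∀ r : ℝ, 0 < r →
      deriv (deriv u) r + (2 / r) * deriv u r = α * u r - β * u r ^ p - u r ^ 5)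
    (R : ℝ) (hR : 0 < R)
    (hRcond : (β / α) * u R ^ (p - 1) + (1 / α) * u R ^ 4 ≤ ε) :
    ∀ r : ℝ, R ≤ r →
      u r ≤ (u R / (Real.exp (-Real.sqrt ((1 - ε) * α) * R) / R)) *
        (Real.exp (-Real.sqrt ((1 - ε) * α) * r) / r) := by
  have hεα : (0:ℝ) < (1 - ε) * α := by nlinarith
  set k := Real.sqrt ((1 - ε) * α) with hk_def
  have hk : 0 < k := Real.sqrt_pos.mpr hεα
  have hk2 : k ^ 2 = (1 - ε) * α := Real.sq_sqrt hεα.le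
  set C := u R / (Real.exp (-k * R) / R) with hC_def
  have hCpos : 0 < C := by
    apply div_pos (hpos R hR)
    positivity
  -- derivatives of u
  have hU : ∀ x : ℝ, 0 < x → HasDerivAt u (deriv u x) x := by
    intro x hx
    have h1 : ContDiffAt ℝ 2 u x := hu.contDiffAt (isOpen_Ioi.mem_nhds hx)
    exact (h1.differentiableAt (by norm_num)).hasDerivAt
  have hU' : ∀ x : ℝ, 0 < x → HasDerivAt (deriv u) (deriv (deriv u) x) x := by
    intro x hx
    have h2 : ContDiffOn ℝ 1 (deriv u) (Ioi 0) :=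
      hu.deriv_of_isOpen isOpen_Ioi (by norm_num)
    exact ((h2.differentiableOn (by norm_num)).differentiableAt (isOpen_Ioi.mem_nhds hx)).hasDerivAt
  -- barrier difference h and its derivatives
  set h : ℝ → ℝ := fun r => r * u r - C * Real.exp (-k * r) with hh_def
  set h' : ℝ → ℝ := fun r => u r + r * deriv u r + k * C * Real.exp (-k * r) with hh'_def
  set h'' : ℝ → ℝ := fun r =>
    2 * deriv u r + r * deriv (deriv u) r - k ^ 2 * C * Real.exp (-k * r) with hh''_def
  have hd1 : ∀ r, R ≤ r → HasDerivAt h (h' r) r := by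
    intro r hr
    have hr0 : 0 < r := lt_of_lt_of_le hR hr
    have H1 : HasDerivAt (fun x => x * u x) (1 * u r + r * deriv u r) r :=
      (hasDerivAt_id r).mul (hU r hr0)
    have H2 : HasDerivAt (fun x => C * Real.exp (-k * x))
        (C * (Real.exp (-k * r) * (-k * 1))) r :=
      (((hasDerivAt_id r).const_mul (-k)).exp).const_mul C
    have H := H1.sub H2
    rw [hh_def, hh'_def]
    convert H using 1
    · rfl
    · rfl
    · rfl
    · beta_reduce
      ring
  have hd2 : ∀ r, R ≤ r → HasDerivAt h' (h'' r) r := by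
    intro r hr
    have hr0 : 0 < r := lt_of_lt_of_le hR hr
    have H1 : HasDerivAt (fun x => x * deriv u x) (1 * deriv u r + r * deriv (deriv u) r) r :=
      (hasDerivAt_id r).mul (hU' r hr0)
    have H2 : HasDerivAt (fun x => k * C * Real.exp (-k * x))
        (k * C * (Real.exp (-k * r) * (-k * 1))) r :=
      (((hasDerivAt_id r).const_mul (-k)).exp).const_mul (k * C)
    have H := ((hU r hr0).add H1).add H2
    rw [hh'_def, hh''_def]
    convert H using 1
    · rfl
    · rfl
    · rfl
    · beta_reduce
      ring
  -- u is decreasing on [R, ∞)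
  have hmono : ∀ r, R ≤ r → u r ≤ u R := by
    intro r hr
    rcases eq_or_lt_of_le hr with h1 | h1
    · rw [← h1]
    · have hanti : StrictAntiOn u (Ici R) := by
        apply strictAntiOn_of_deriv_neg (convex_Ici R)
        · exact fun x hx => (hU x (lt_of_lt_of_le hR hx)).continuousAt.continuousWithinAt
        · intro x hx
          rw [interior_Ici] at hx
          exact hdec x (hR.trans hx)
      exact (hanti self_mem_Ici hr h1).le
  -- the key differential inequality
  have hRcond' : β * u R ^ (p - 1) + u R ^ 4 ≤ ε * α := by
    have e1 : α * ((β / α) * u R ^ (p - 1) + (1 / α) * u R ^ 4)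
        = β * u R ^ (p - 1) + u R ^ 4 := by
      field_simp
    nlinarith [mul_le_mul_of_nonneg_left hRcond hα.le]
  have hineq : ∀ r, R ≤ r → k ^ 2 * h r ≤ h'' r := by
    intro r hr
    have hr0 : 0 < r := lt_of_lt_of_le hR hr
    have ha : 0 < u r := hpos r hr0
    have hA : 0 < u R := hpos R hR
    have key : 2 * deriv u r + r * deriv (deriv u) r
        = r * (α * u r - β * u r ^ p - u r ^ 5) := by
      have e1 := hode r hr0
      have hrne : r ≠ 0 := hr0.ne'
      field_simp at e1
      linear_combination e1
    have hap : u r ^ p = u r * u r ^ (p - 1) := by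
      have e2 := Real.rpow_add ha 1 (p - 1)
      rw [Real.rpow_one] at e2
      rw [show (1:ℝ) + (p - 1) = p by ring] at e2
      exact e2
    have hle : u r ≤ u R := hmono r hr
    have h1 : u r ^ (p - 1) ≤ u R ^ (p - 1) :=
      Real.rpow_le_rpow ha.le hle (by linarith)
    have h2 : u r ^ 4 ≤ u R ^ 4 := pow_le_pow_left₀ ha.le hle 4
    have hbound : β * u r ^ (p - 1) + u r ^ 4 ≤ ε * α := by
      nlinarith
    have main : 0 ≤ r * u r * (ε * α - (β * u r ^ (p - 1) + u r ^ 4)) :=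
      mul_nonneg (by positivity) (by linarith)
    rw [hh_def, hh''_def]
    simp only []
    rw [key, hap, hk2]
    nlinarith
  -- h vanishes at R
  have hR0 : h R = 0 := by
    rw [hh_def]
    simp only []
    rw [hC_def]
    field_simp
    ring
  -- main argument
  intro r hrR
  by_contra hcon
  push_neg at hcon
  have hr0 : 0 < r := lt_of_lt_of_le hR hrR
  have hhr : 0 < h r := by
    rw [hh_def]; simp only []
    have h2 : C * (Real.exp (-k * r) / r) < u r := hcon
    rw [← mul_div_assoc] at h2
    have h3 : C * Real.exp (-k * r) < u r * r := (div_lt_iff₀ hr0).mp h2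
    nlinarith
  obtain ⟨s, c, hsR, hc, hgrow⟩ := grow_aux16 k R r hk h h' h'' hd1 hd2 hineq hR0 hrR hhr
  have hs0 : 0 < s := lt_of_lt_of_le hR hsR
  have hub : ∀ x, s ≤ x → c * (x - s) ^ 2 ≤ x * u x := by
    intro x hx
    refine le_trans (hgrow x hx) ?_
    rw [hh_def]; simp only []
    have : 0 < C * Real.exp (-k * x) := by positivity
    linarith
  obtain ⟨M, hM⟩ := eventually_atTop.mp (hlim.eventually_lt_const one_pos)
  exact final_aux16 u s c M hs0 hc hub (fun x hx => hM x hx)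
end
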